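/- Let m > d ≥ 1 and 0 < r_1 < r_2. For every k ∈ ℤ, b ∈ ℝ^d, and every x ∈ ℝ^m such that |x_j| ≤ r_1/√(m−d) for all j ∈ {d+1, …, m}, the extended wavelet agrees with the d-dimensional wavelet evaluated at the first d coordinates: Ψ_{k,b}(x) = ψ_{k,b}(x_1, …, x_d). -/

import Mathlib

open MeasureTheory

/-- The rectifier (ReLU) function. -/
noncomputable def rect (x : ℝ) : ℝ := max 0 x

/-- The trapezoid function `t`: equal to 2 on [-1,1], vanishing outside (-3,3), linear between. -/
noncomputable def trap (x : ℝ) : ℝ := rect (x + 3) - rect (x + 1) - rect (x - 1) + rect (x - 3)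

/-- The scaling ("father") function `φ(x) = C_d · rect(Σ_j t(x_j) − 2(d−1))` on `ℝ^d`. -/
noncomputable def scalingFn (d : ℕ) (Cd : ℝ) (x : EuclideanSpace ℝ (Fin d)) : ℝ :=
  Cd * rect ((∑ j, trap (x j)) - 2 * ((d : ℝ) - 1))

/-- The ("mother") wavelet `ψ(x) = φ(x) − 2⁻¹ φ(2^{−1/d} x)`. -/
noncomputable def psiFn (d : ℕ) (Cd : ℝ) (x : EuclideanSpace ℝ (Fin d)) : ℝ :=
  scalingFn d Cd x - 2⁻¹ * scalingFn d Cd (((2 : ℝ) ^ (-(1 : ℝ) / d)) • x)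

/-- The wavelet term `ψ_{k,b}(x) = 2^{k/2} ψ(2^{k/d}(x − b))`. -/
noncomputable def psikb (d : ℕ) (Cd : ℝ) (k : ℤ) (b x : EuclideanSpace ℝ (Fin d)) : ℝ :=
  (2 : ℝ) ^ ((k : ℝ) / 2) * psiFn d Cd (((2 : ℝ) ^ ((k : ℝ) / d)) • (x - b))

/-- The trapezoid `t_r` of height 2, equal to 2 on `[−α,α]` and vanishing outside `(−β,β)`. -/
noncomputable def trapr (a b x : ℝ) : ℝ :=
  (2 / (b - a)) * (rect (x + b) - rect (x + a) - rect (x - a) + rect (x - b))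

/-- The extended scaling function `φ_r^{k,b} : ℝ^m → ℝ`. -/
noncomputable def extScaling (m d : ℕ) (Cd r1 r2 : ℝ) (k : ℤ) (b : Fin d → ℝ)
    (x : EuclideanSpace ℝ (Fin m)) : ℝ :=
  Cd * rect ((∑ j : Fin m,
      if h : (j : ℕ) < d then trap ((2 : ℝ) ^ ((k : ℝ) / d) * (x j - b ⟨j, h⟩))
      else trapr (r1 / Real.sqrt ((m : ℝ) - d)) (r2 / Real.sqrt ((m : ℝ) - d)) (x j)) -
    2 * ((m : ℝ) - 1))

/-- The extended wavelet `Ψ_{k,b}(x) = 2^{k/2}(φ_r^{k,b}(x) − 2⁻¹ φ_r^{k−1,b}(x))`. -/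
noncomputable def extPsi (m d : ℕ) (Cd r1 r2 : ℝ) (k : ℤ) (b : Fin d → ℝ)
    (x : EuclideanSpace ℝ (Fin m)) : ℝ :=
  (2 : ℝ) ^ ((k : ℝ) / 2) *
    (extScaling m d Cd r1 r2 k b x - 2⁻¹ * extScaling m d Cd r1 r2 (k - 1) b x)

lemma trapr_eq_two {a b x : ℝ} (ha : 0 < a) (hab : a < b) (hx : |x| ≤ a) : trapr a b x = 2 := by
  obtain ⟨h1, h2⟩ := abs_le.mp hx
  have hba : b - a ≠ 0 := by linarith
  rw [trapr, rect, rect, rect, rect,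
    max_eq_right (by linarith : (0:ℝ) ≤ x + b),
    max_eq_right (by linarith : (0:ℝ) ≤ x + a),
    max_eq_left (by linarith : x - a ≤ 0),
    max_eq_left (by linarith : x - b ≤ 0),
    show x + b - (x + a) - 0 + 0 = b - a by ring, div_mul_cancel₀ _ hba]

lemma extScaling_eq (m d : ℕ) (hdm : d < m) (Cd r1 r2 : ℝ)
    (hr1 : 0 < r1) (hr12 : r1 < r2) (k : ℤ) (b : Fin d → ℝ)
    (x : EuclideanSpace ℝ (Fin m))
    (hx : ∀ j : Fin m, d ≤ (j : ℕ) → |x j| ≤ r1 / Real.sqrt ((m : ℝ) - d)) :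
    extScaling m d Cd r1 r2 k b x =
      scalingFn d Cd (WithLp.toLp 2 (fun i : Fin d =>
        (2 : ℝ) ^ ((k : ℝ) / d) * (x (Fin.castLE hdm.le i) - b i))) := by
  have hmd : (0:ℝ) < (m : ℝ) - d := by
    have := (Nat.cast_lt (α := ℝ)).mpr hdm; linarith
  have hs : 0 < Real.sqrt ((m : ℝ) - d) := Real.sqrt_pos.mpr hmd
  have ha : 0 < r1 / Real.sqrt ((m : ℝ) - d) := div_pos hr1 hs
  have hab : r1 / Real.sqrt ((m : ℝ) - d) < r2 / Real.sqrt ((m : ℝ) - d) :=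
    (div_lt_div_iff_of_pos_right hs).mpr hr12
  set S : Finset (Fin m) := Finset.univ.filter (fun j : Fin m => (j : ℕ) < d) with hS
  have himg : S = Finset.image (Fin.castLE hdm.le) Finset.univ := by
    ext j
    simp only [hS, Finset.mem_filter, Finset.mem_univ, true_and, Finset.mem_image]
    constructor
    · intro h; exact ⟨⟨j, h⟩, by ext; rfl⟩
    · rintro ⟨i, rfl⟩; exact i.isLt
  have hsum : (∑ j : Fin m,
      if h : (j : ℕ) < d then trap ((2 : ℝ) ^ ((k : ℝ) / d) * (x j - b ⟨j, h⟩))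
      else trapr (r1 / Real.sqrt ((m : ℝ) - d)) (r2 / Real.sqrt ((m : ℝ) - d)) (x j)) =
      (∑ i : Fin d, trap ((2 : ℝ) ^ ((k : ℝ) / d) * (x (Fin.castLE hdm.le i) - b i)))
        + 2 * ((m : ℝ) - d) := by
    rw [← Finset.sum_filter_add_sum_filter_not Finset.univ (fun j : Fin m => (j : ℕ) < d)]
    congr 1
    · rw [← hS, himg, Finset.sum_image (fun a _ b _ h => Fin.castLE_injective _ h)]
      refine Finset.sum_congr rfl fun i _ => ?_
      rw [dif_pos (show ((Fin.castLE hdm.le i : Fin m) : ℕ) < d from i.isLt)]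
      rfl
    · have hcard : (Finset.univ.filter (fun j : Fin m => ¬ (j : ℕ) < d)).card = m - d := by
        have h1 : S.card = d := by
          rw [himg, Finset.card_image_of_injective _ (Fin.castLE_injective _)]
          simp
        have h2 := Finset.card_filter_add_card_filter_not
          (s := (Finset.univ : Finset (Fin m))) (p := fun j : Fin m => (j : ℕ) < d)
        rw [← hS] at h2
        rw [Finset.card_univ, Fintype.card_fin] at h2
        omega
      have : ∀ j ∈ Finset.univ.filter (fun j : Fin m => ¬ (j : ℕ) < d),
          (if h : (j : ℕ) < d then trap ((2 : ℝ) ^ ((k : ℝ) / d) * (x j - b ⟨j, h⟩))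
          else trapr (r1 / Real.sqrt ((m : ℝ) - d)) (r2 / Real.sqrt ((m : ℝ) - d)) (x j))
          = 2 := by
        intro j hj
        rw [Finset.mem_filter] at hj
        rw [dif_neg hj.2, trapr_eq_two ha hab (hx j (not_lt.mp hj.2))]
      rw [Finset.sum_congr rfl this, Finset.sum_const, hcard, nsmul_eq_mul,
        Nat.cast_sub hdm.le]
      ring
  rw [extScaling, scalingFn, hsum]
  congr 2
  simp only [PiLp.toLp_apply]
  ring

/-- when `|x_j| ≤ r₁/√(m−d)` for all the last `m − d` coordinates, the extended
wavelet agrees with the `d`-dimensional wavelet evaluated at the first `d` coordinates. -/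
theorem statement15 (m d : ℕ) (hd : 1 ≤ d) (hdm : d < m) (Cd : ℝ) (hCd : 0 < Cd)
    (hnorm : ∫ x : EuclideanSpace ℝ (Fin d), scalingFn d Cd x = 1)
    (r1 r2 : ℝ) (hr1 : 0 < r1) (hr12 : r1 < r2)
    (k : ℤ) (b : Fin d → ℝ) (x : EuclideanSpace ℝ (Fin m))
    (hx : ∀ j : Fin m, d ≤ (j : ℕ) → |x j| ≤ r1 / Real.sqrt ((m : ℝ) - d)) :
    extPsi m d Cd r1 r2 k b x =
      psikb d Cd k (WithLp.toLp 2 b) (WithLp.toLp 2 (fun j : Fin d => x (Fin.castLE hdm.le j))) := by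
  have hd0 : (d:ℝ) ≠ 0 := Nat.cast_ne_zero.mpr (by omega)
  rw [extPsi, extScaling_eq m d hdm Cd r1 r2 hr1 hr12 k b x hx,
    extScaling_eq m d hdm Cd r1 r2 hr1 hr12 (k-1) b x hx, psikb, psiFn]
  have e1 : WithLp.toLp 2 (fun i : Fin d => (2:ℝ) ^ ((k:ℝ)/d) * (x (Fin.castLE hdm.le i) - b i)) =
      (((2:ℝ) ^ ((k:ℝ)/d)) • (WithLp.toLp 2 (fun j : Fin d => x (Fin.castLE hdm.le j)) - WithLp.toLp 2 b)
        : EuclideanSpace ℝ (Fin d)) := by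
    ext i
    simp [PiLp.smul_apply, PiLp.sub_apply, smul_eq_mul]
  have e2 : WithLp.toLp 2 (fun i : Fin d => (2:ℝ) ^ (((k-1:ℤ):ℝ)/d) * (x (Fin.castLE hdm.le i) - b i)) =
      (((2:ℝ) ^ (-(1:ℝ)/d)) • (((2:ℝ) ^ ((k:ℝ)/d)) •
        (WithLp.toLp 2 (fun j : Fin d => x (Fin.castLE hdm.le j)) - WithLp.toLp 2 b)) : EuclideanSpace ℝ (Fin d)) := by
    ext i
    simp only [PiLp.toLp_apply, PiLp.smul_apply, PiLp.sub_apply, Pi.smul_apply, Pi.sub_apply, smul_eq_mul]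
    rw [← mul_assoc, ← Real.rpow_add (by norm_num : (0:ℝ) < 2)]
    congr 1
    push_cast
    field_simp
    ring
  rw [e1, e2]
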